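/- For every integer k ≥ 1 and all nonnegative integers d_1, …, d_k, the following identity holds in ℚ(q, x): (x²;q²)_{d_1+⋯+d_k} / ((q²;q²)_{d_1} ⋯ (q²;q²)_{d_k}) = ∑ (−x² q^{−1})^{α_1+⋯+α_k} · q^{α_1²+⋯+α_k² + 2 ∑_{i=1}^{k−1} α_{i+1}(d_1+⋯+d_i)} / ((q²;q²)_{α_1} ⋯ (q²;q²)_{α_k} (q²;q²)_{β_1} ⋯ (q²;q²)_{β_k}), where the sum runs over all nonnegative integers α_1, β_1, …, α_k, β_k with α_i + β_i = d_i for each i. -/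

import Mathlib

noncomputable section

open Finset

/-- The field `ℚ(q, x)` of rational functions in two variables. -/
abbrev F : Type := FractionRing (MvPolynomial (Fin 2) ℚ)

/-- The variable `q`. -/
def q : F := algebraMap (MvPolynomial (Fin 2) ℚ) F (MvPolynomial.X 0)

/-- The variable `x`. -/
def x : F := algebraMap (MvPolynomial (Fin 2) ℚ) F (MvPolynomial.X 1)

/-- The q-Pochhammer symbol `(x; y)_n = ∏_{j=0}^{n-1} (1 - x yʲ)`. -/
def qPoch (u v : F) (n : ℕ) : F := ∏ i ∈ Finset.range n, (1 - u * v ^ i)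

/-- `(q²;q²)_m = ∏_{i=1}^{m} (1 - q^{2i})`. -/
def qp (m : ℕ) : F := qPoch (q ^ 2) (q ^ 2) m

/-- The positive quantum binomial coefficient `[N; k]₊`. -/
def qbin (N k : ℕ) : F := qp N / (qp k * qp (N - k))

lemma q_ne_zero : q ≠ 0 := by
  simp only [q, ne_eq, map_eq_zero_iff _ (IsFractionRing.injective (MvPolynomial (Fin 2) ℚ) F)]
  exact MvPolynomial.X_ne_zero 0

lemma one_sub_q_pow_ne_zero (n : ℕ) (hn : n ≠ 0) : (1 : F) - q ^ n ≠ 0 := by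
  have : (1 : F) - q ^ n = algebraMap (MvPolynomial (Fin 2) ℚ) F (1 - MvPolynomial.X 0 ^ n) := by
    simp [q, map_sub, map_pow, map_one]
  rw [this, ne_eq, map_eq_zero_iff _ (IsFractionRing.injective (MvPolynomial (Fin 2) ℚ) F)]
  intro h
  have := congrArg (MvPolynomial.coeff (Finsupp.single 0 n)) h
  simp [MvPolynomial.coeff_X_pow, MvPolynomial.coeff_one, Finsupp.single_eq_zero, hn] at this
  rw [if_neg (by simp [eq_comm, Finsupp.single_eq_zero]; exact hn)] at this
  norm_num at this

lemma qp_zero : qp 0 = 1 := by simp [qp, qPoch]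

lemma qp_succ (m : ℕ) : qp (m+1) = qp m * (1 - q ^ (2*m+2)) := by
  have h : (q:F)^2 * (q^2)^m = q^(2*m+2) := by
    rw [← pow_mul, ← pow_add]; congr 1; omega
  simp only [qp, qPoch, Finset.prod_range_succ, h]

lemma qp_ne_zero (m : ℕ) : qp m ≠ 0 := by
  induction m with
  | zero => simp [qp_zero]
  | succ n ih =>
    rw [qp_succ]
    exact mul_ne_zero ih (one_sub_q_pow_ne_zero _ (by omega))

lemma qbinom (u : F) (n : ℕ) :
    qPoch u (q ^ 2) n =
      qp n * ∑ a ∈ Finset.range (n+1), (-u) ^ a * q ^ (a*(a-1)) / (qp a * qp (n-a)) := by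
  induction n with
  | zero => simp [qPoch, qp_zero]
  | succ n ih =>
    have hq2n : ((q:F)^2)^n = q^(2*n) := by rw [← pow_mul]
    have LHS : qPoch u (q^2) (n+1) = qPoch u (q^2) n * (1 - u * q^(2*n)) := by
      rw [qPoch, Finset.prod_range_succ, ← qPoch, hq2n]
    rw [LHS, ih]
    -- now prove qp (n+1) * S (n+1) = qp n * S n * (1 - u * q^(2n))
    rw [Finset.mul_sum, Finset.mul_sum]
    -- pointwise split of the (n+1) sum
    have split : ∀ a ∈ Finset.range (n+2),
        qp (n+1) * ((-u) ^ a * q ^ (a*(a-1)) / (qp a * qp (n+1-a))) =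
        ((-u) ^ a * q ^ (a*(a-1)) * qp n * (1 - q^(2*(n+1-a))) / (qp a * qp (n+1-a)))
        + ((-u) ^ a * q ^ (a*(a-1)) * qp n * (q^(2*(n+1-a)) * (1 - q^(2*a))) / (qp a * qp (n+1-a))) := by
      intro a ha
      rw [Finset.mem_range] at ha
      have key : (1 : F) - q^(2*n+2) = (1 - q^(2*(n+1-a))) + q^(2*(n+1-a)) * (1 - q^(2*a)) := by
        have hp : (q:F)^(2*(n+1-a)) * q^(2*a) = q^(2*n+2) := by
          rw [← pow_add]; congr 1; omega
        linear_combination hp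
      rw [qp_succ, key]; ring
    rw [Finset.sum_congr rfl split, Finset.sum_add_distrib]
    -- first sum
    have s1 : ∑ a ∈ Finset.range (n+2),
        ((-u) ^ a * q ^ (a*(a-1)) * qp n * (1 - q^(2*(n+1-a))) / (qp a * qp (n+1-a)))
        = ∑ a ∈ Finset.range (n+1), qp n * ((-u) ^ a * q ^ (a*(a-1)) / (qp a * qp (n-a))) := by
      rw [Finset.sum_range_succ]
      simp only [Nat.sub_self, mul_zero, pow_zero, sub_self, mul_zero, zero_div, add_zero]
      apply Finset.sum_congr rfl
      intro a ha
      rw [Finset.mem_range] at ha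
      have h1 : n + 1 - a = (n - a) + 1 := by omega
      have h2 : 2 * (n + 1 - a) = 2 * (n - a) + 2 := by omega
      rw [h2, h1, qp_succ]
      have e1 : qp a ≠ 0 := qp_ne_zero a
      have e2 : qp (n - a) ≠ 0 := qp_ne_zero (n - a)
      have e3 : (1:F) - q ^ (2*(n-a)+2) ≠ 0 := one_sub_q_pow_ne_zero _ (by omega)
      field_simp
    -- second sum
    have s2 : ∑ a ∈ Finset.range (n+2),
        ((-u) ^ a * q ^ (a*(a-1)) * qp n * (q^(2*(n+1-a)) * (1 - q^(2*a))) / (qp a * qp (n+1-a)))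
        = ∑ a ∈ Finset.range (n+1),
            (-u * q^(2*n)) * (qp n * ((-u) ^ a * q ^ (a*(a-1)) / (qp a * qp (n-a)))) := by
      rw [Finset.sum_range_succ']
      simp only [mul_zero, pow_zero, sub_self, mul_zero, zero_div, add_zero, zero_mul]
      apply Finset.sum_congr rfl
      intro b hb
      rw [Finset.mem_range] at hb
      have h1 : n + 1 - (b + 1) = n - b := by omega
      have hpow : (q:F)^((b+1)*b) * q^(2*(n-b)) = q^(b*(b-1)) * q^(2*n) := by
        rw [← pow_add, ← pow_add]
        congr 1
        rcases b with _ | c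
        · omega
        · simp only [Nat.add_sub_cancel]
          have : c + 1 ≤ n := by omega
          obtain ⟨m, rfl⟩ : ∃ m, n = (c+1) + m := ⟨n - (c+1), by omega⟩
          rw [Nat.add_sub_cancel_left]
          ring
      have e1 : qp b ≠ 0 := qp_ne_zero b
      have e2 : qp (n - b) ≠ 0 := qp_ne_zero (n - b)
      have e3 : (1:F) - q ^ (2*b+2) ≠ 0 := one_sub_q_pow_ne_zero _ (by omega)
      have h2 : 2 * (b + 1) = 2 * b + 2 := by omega
      rw [h1, Nat.add_sub_cancel, h2, qp_succ]
      have hnum : (-u)^(b+1) * q^((b+1)*b) * qp n * (q^(2*(n-b)) * (1 - q^(2*b+2)))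
          = (-u * q^(2*n)) * ((-u)^b * q^(b*(b-1)) * qp n) * (1 - q^(2*b+2)) := by
        rw [pow_succ]
        linear_combination ((-u)^b * (-u) * qp n * (1 - q^(2*b+2))) * hpow
      rw [hnum]
      field_simp
    rw [s1, s2, ← Finset.mul_sum, ← Finset.mul_sum, ← Finset.mul_sum]
    ring

lemma Iio_castSucc_eq {k : ℕ} (j : Fin k) :
    Finset.Iio (Fin.castSucc j) = (Finset.Iio j).map Fin.castSuccEmb := by
  ext a
  simp only [Finset.mem_Iio, Finset.mem_map, Fin.coe_castSuccEmb]
  constructor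
  · intro h
    have hj := j.isLt
    have h' : a.val < j.val := h
    refine ⟨⟨a.val, by omega⟩, h', ?_⟩
    ext
    simp
  · rintro ⟨b, hb, rfl⟩
    exact hb

lemma Iio_last_eq {k : ℕ} :
    Finset.Iio (Fin.last k) = Finset.univ.map (Fin.castSuccEmb (n := k)) := by
  ext a
  simp only [Finset.mem_Iio, Finset.mem_map, Finset.mem_univ, true_and, Fin.coe_castSuccEmb]
  constructor
  · intro h
    have h' : a.val < k := h
    refine ⟨⟨a.val, h'⟩, ?_⟩
    ext
    simp
  · rintro ⟨b, rfl⟩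
    exact b.isLt

lemma sum_Iio_castSucc {k : ℕ} (f : Fin (k+1) → ℕ) (j : Fin k) :
    ∑ i ∈ Finset.Iio (Fin.castSucc j), f i = ∑ i ∈ Finset.Iio j, f (Fin.castSucc i) := by
  rw [Iio_castSucc_eq, Finset.sum_map]
  rfl

lemma sum_Iio_last {k : ℕ} (f : Fin (k+1) → ℕ) :
    ∑ i ∈ Finset.Iio (Fin.last k), f i = ∑ i : Fin k, f (Fin.castSucc i) := by
  rw [Iio_last_eq, Finset.sum_map]
  rfl

lemma sum_piFinset_snoc {k : ℕ} (d : Fin (k+1) → ℕ) (f : (Fin (k+1) → ℕ) → F) :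
    ∑ α ∈ Fintype.piFinset (fun i : Fin (k+1) => Finset.range (d i + 1)), f α =
    ∑ β ∈ Fintype.piFinset (fun i : Fin k => Finset.range (d (Fin.castSucc i) + 1)),
      ∑ a ∈ Finset.range (d (Fin.last k) + 1), f (Fin.snoc β a) := by
  rw [← Finset.sum_product']
  apply Finset.sum_nbij' (i := fun α => (Fin.init α, α (Fin.last k)))
    (j := fun p => Fin.snoc p.1 p.2)
  · intro α hα
    rw [Fintype.mem_piFinset] at hα
    rw [Finset.mem_product]
    exact ⟨by rw [Fintype.mem_piFinset]; intro i; exact hα _, hα _⟩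
  · intro p hp
    rw [Finset.mem_product, Fintype.mem_piFinset] at hp
    rw [Fintype.mem_piFinset]
    intro i
    refine Fin.lastCases ?_ ?_ i
    · rw [Fin.snoc_last]; exact hp.2
    · intro j; rw [Fin.snoc_castSucc]; exact hp.1 j
  · intro α _
    exact Fin.snoc_init_self α
  · intro p _
    simp [Fin.init_snoc, Fin.snoc_last]
  · intro α _
    rw [Fin.snoc_init_self]

lemma qPoch_add (u v : F) (m n : ℕ) :
    qPoch u v (m + n) = qPoch u v m * qPoch (u * v ^ m) v n := by
  rw [qPoch, qPoch, qPoch, Finset.prod_range_add]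
  congr 1
  apply Finset.prod_congr rfl
  intro i _
  rw [pow_add]
  ring

lemma nat_sq (a : ℕ) : a^2 = a*(a-1) + a := by
  cases a with
  | zero => rfl
  | succ c => simp [Nat.succ_sub_one]; ring

lemma main_aux (k : ℕ) (d : Fin k → ℕ) :
    qPoch (x ^ 2) (q ^ 2) (∑ i, d i) / ∏ i, qp (d i) =
      ∑ α ∈ Fintype.piFinset (fun i : Fin k => Finset.range (d i + 1)),
        (-(x ^ 2) * q⁻¹) ^ (∑ i, α i) *
          q ^ ((∑ i, (α i) ^ 2) + 2 * ∑ j : Fin k, α j * (∑ i ∈ Finset.Iio j, d i)) /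
          ((∏ i, qp (α i)) * ∏ i, qp (d i - α i)) := by
  induction k with
  | zero => simp [qPoch, qp_zero]
  | succ k ih =>
    set D := ∑ i : Fin k, d (Fin.castSucc i) with hD
    set dl := d (Fin.last k) with hdl
    have hpow2 : ((q:F)^2)^D = q^(2*D) := by rw [← pow_mul]
    rw [Fin.sum_univ_castSucc, Fin.prod_univ_castSucc, qPoch_add, hpow2, ← div_mul_div_comm,
      ih (fun i => d (Fin.castSucc i)), qbinom, mul_div_cancel_left₀ _ (qp_ne_zero dl),
      sum_piFinset_snoc, Finset.sum_mul_sum]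
    apply Finset.sum_congr rfl
    intro β hβ
    apply Finset.sum_congr rfl
    intro a ha
    have e1 : ∑ i : Fin (k+1), (Fin.snoc β a : Fin (k+1) → ℕ) i = (∑ i : Fin k, β i) + a := by
      rw [Fin.sum_univ_castSucc]; simp
    have e2 : ∑ i : Fin (k+1), ((Fin.snoc β a : Fin (k+1) → ℕ) i)^2
        = (∑ i : Fin k, (β i)^2) + a^2 := by
      rw [Fin.sum_univ_castSucc]; simp
    have e3 : ∑ j : Fin (k+1), (Fin.snoc β a : Fin (k+1) → ℕ) j * (∑ i ∈ Finset.Iio j, d i)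
        = (∑ j : Fin k, β j * (∑ i ∈ Finset.Iio j, d (Fin.castSucc i))) + a * D := by
      rw [Fin.sum_univ_castSucc]
      congr 1
      · apply Finset.sum_congr rfl
        intro j _
        rw [Fin.snoc_castSucc, sum_Iio_castSucc]
      · rw [Fin.snoc_last, sum_Iio_last]
    have e4 : ∏ i : Fin (k+1), qp ((Fin.snoc β a : Fin (k+1) → ℕ) i)
        = (∏ i : Fin k, qp (β i)) * qp a := by
      rw [Fin.prod_univ_castSucc]; simp
    have e5 : ∏ i : Fin (k+1), qp (d i - (Fin.snoc β a : Fin (k+1) → ℕ) i)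
        = (∏ i : Fin k, qp (d (Fin.castSucc i) - β i)) * qp (dl - a) := by
      rw [Fin.prod_univ_castSucc]; simp [hdl]
    rw [e1, e2, e3, e4, e5]
    have key : (-(x^2*q^(2*D)) : F)^a = (-(x^2) * q⁻¹)^a * q^(a + 2*(a*D)) := by
      rw [show (-(x^2*q^(2*D)) : F) = (-(x^2) * q⁻¹) * q^(2*D+1) by
        have hq : (q:F) ≠ 0 := q_ne_zero
        rw [pow_succ]; field_simp; ring,
        mul_pow, ← pow_mul]
      congr 1
      congr 1
      ring
    have ee : ∀ Q E : ℕ, (Q + a^2) + 2*(E + a*D) = (Q + 2*E) + (a*(a-1) + (a + 2*(a*D))) := by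
      intro Q E
      rw [nat_sq a]
      ring
    rw [ee, key, pow_add, pow_add, pow_add]
    ring

/-- Lemma 4.5 of KRSS: splitting a q-Pochhammer over several summation indices. -/
theorem pochhammer_splitting (k : ℕ) (hk : 1 ≤ k) (d : Fin k → ℕ) :
    qPoch (x ^ 2) (q ^ 2) (∑ i, d i) / ∏ i, qp (d i) =
      ∑ α ∈ Fintype.piFinset (fun i : Fin k => Finset.range (d i + 1)),
        (-(x ^ 2) * q⁻¹) ^ (∑ i, α i) *
          q ^ ((∑ i, (α i) ^ 2) + 2 * ∑ j : Fin k, α j * (∑ i ∈ Finset.Iio j, d i)) /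
          ((∏ i, qp (α i)) * ∏ i, qp (d i - α i)) := by
  exact main_aux k d
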